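/- Let H be a multigraph whose edge set is the disjoint union of two edge-disjoint cycles C1 and C2 that share at least three vertices. Then c(H) = 2 and ν(H) ≥ 3. -/

import Mathlib

open scoped Classical

/-- A finite multigraph without loops: a vertex type, an edge type, and an
incidence map assigning to each edge an unordered pair of distinct vertices. -/
structure MGraph where
  V : Type
  E : Type
  finV : Finite V
  finE : Finite E
  ends : E → Sym2 V
  noLoop : ∀ e, ¬ (ends e).IsDiag

namespace MGraph

variable (G : MGraph)

/-- Degree of a vertex counting only edges in the edge set `F`. -/
noncomputable def degOn (F : Set G.E) (v : G.V) : ℕ := {e | e ∈ F ∧ v ∈ G.ends e}.ncard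

/-- Degree of a vertex. -/
noncomputable def deg (v : G.V) : ℕ := G.degOn Set.univ v

/-- Adjacency using only edges from `F`. -/
def AdjOn (F : Set G.E) (a b : G.V) : Prop := ∃ e ∈ F, G.ends e = s(a, b)

/-- Reachability using only edges from `F`. -/
def ReachOn (F : Set G.E) : G.V → G.V → Prop := Relation.ReflTransGen (G.AdjOn F)

/-- Connectivity of a multigraph. -/
def Connected : Prop := Nonempty G.V ∧ ∀ a b : G.V, G.ReachOn Set.univ a b

/-- A set of edges forms a cycle: it is nonempty, every vertex has degree 0 or 2
in it, and any two of its endpoints are joined by a path inside it. -/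
def IsCycle (C : Set G.E) : Prop :=
  C.Nonempty ∧ (∀ v, G.degOn C v = 0 ∨ G.degOn C v = 2) ∧
    ∀ e ∈ C, ∀ f ∈ C, ∀ a b : G.V, a ∈ G.ends e → b ∈ G.ends f → G.ReachOn C a b

/-- A cycle decomposition of the edge set `F`: a set of cycles inside `F` such
that every edge of `F` lies in exactly one of them. -/
def IsCycleDecompOn (F : Set G.E) (D : Set (Set G.E)) : Prop :=
  (∀ C ∈ D, G.IsCycle C ∧ C ⊆ F) ∧ ∀ e ∈ F, ∃! C, C ∈ D ∧ e ∈ C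

/-- A cycle decomposition of the graph. -/
def IsCycleDecomp (D : Set (Set G.E)) : Prop := G.IsCycleDecompOn Set.univ D

/-- Minimum number of cycles in a cycle decomposition of `F`. -/
noncomputable def cOn (F : Set G.E) : ℕ :=
  sInf {n | ∃ D, G.IsCycleDecompOn F D ∧ D.ncard = n}

/-- Maximum number of cycles in a cycle decomposition of `F`. -/
noncomputable def nuOn (F : Set G.E) : ℕ :=
  sSup {n | ∃ D, G.IsCycleDecompOn F D ∧ D.ncard = n}

/-- Minimum cycle number. -/
noncomputable def c : ℕ := G.cOn Set.univ

/-- Maximum cycle number. -/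
noncomputable def nu : ℕ := G.nuOn Set.univ

/-- A multigraph is Eulerian if it admits a closed walk traversing every edge
exactly once. -/
def IsEulerian : Prop :=
  ∃ (vs : List G.V) (es : List G.E),
    vs.length = es.length + 1 ∧
    (∀ (i : ℕ) (e : G.E) (a b : G.V), es[i]? = some e → vs[i]? = some a →
      vs[i + 1]? = some b → G.ends e = s(a, b)) ∧
    vs.head? = vs.getLast? ∧ es.Nodup ∧ ∀ e : G.E, e ∈ es

/-- A cut-edge (bridge): its endpoints are disconnected after its removal. -/
def IsBridge (e : G.E) : Prop :=
  ∃ a b, G.ends e = s(a, b) ∧ ¬ G.ReachOn {e}ᶜ a b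

/-- 2-edge-connectivity: connected and without cut-edges. -/
def TwoEdgeConnected : Prop := G.Connected ∧ ∀ e, ¬ G.IsBridge e

/-- Reachability avoiding a vertex. -/
def ReachAvoid (v : G.V) (a b : G.V) : Prop :=
  Relation.ReflTransGen (fun x y => x ≠ v ∧ y ≠ v ∧ G.AdjOn Set.univ x y) a b

/-- A cut-vertex: two vertices in the same component get separated by its removal. -/
def IsCutVertex (v : G.V) : Prop :=
  ∃ a b, a ≠ v ∧ b ≠ v ∧ G.ReachOn Set.univ a b ∧ ¬ G.ReachAvoid v a b

/-- Biconnected: connected, at least two vertices, and without cut-vertices. -/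
def Biconnected : Prop :=
  G.Connected ∧ 2 ≤ Nat.card G.V ∧ ∀ v, ¬ G.IsCutVertex v

/-- The vertices covered by a set of edges. -/
def VertexSetOf (C : Set G.E) : Set G.V := {v | ∃ e ∈ C, v ∈ G.ends e}

/-- No two edge-disjoint cycles share more than two vertices. -/
def NoTwoCyclesShareThree : Prop :=
  ∀ C1 C2 : Set G.E, G.IsCycle C1 → G.IsCycle C2 → Disjoint C1 C2 →
    (G.VertexSetOf C1 ∩ G.VertexSetOf C2).ncard ≤ 2

/-- An Eulerian multiedge: two vertices joined by an even positive number of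
parallel edges. -/
def IsEulerianMultiedge : Prop :=
  Nat.card G.V = 2 ∧ 0 < Nat.card G.E ∧ Even (Nat.card G.E)

end MGraph

/-- Isomorphism of multigraphs. -/
structure MIso (G H : MGraph) where
  vEquiv : G.V ≃ H.V
  eEquiv : G.E ≃ H.E
  ends_eq : ∀ e, H.ends (eEquiv e) = (G.ends e).map vEquiv

namespace MGraph

/-- Vertex-identification: glue `u1 ∈ V(G1)` with `u2 ∈ V(G2)`. -/
noncomputable def vertexIdent (G1 G2 : MGraph) (u1 : G1.V) (u2 : G2.V) : MGraph where
  V := G1.V ⊕ {v : G2.V // v ≠ u2}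
  E := G1.E ⊕ G2.E
  finV := by have := G1.finV; have := G2.finV; infer_instance
  finE := by have := G1.finE; have := G2.finE; infer_instance
  ends := fun e =>
    match e with
    | Sum.inl e => (G1.ends e).map Sum.inl
    | Sum.inr e => (G2.ends e).map
        (fun v => if h : v = u2 then Sum.inl u1 else Sum.inr ⟨v, h⟩)
  noLoop := by
    rintro (e | e) h
    · exact G1.noLoop e ((Sym2.isDiag_map Sum.inl_injective).mp h)
    · refine G2.noLoop e ((Sym2.isDiag_map ?_).mp h)
      intro a b hab
      by_cases ha : a = u2 <;> by_cases hb : b = u2 <;>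
        simp [ha, hb] at hab ⊢ <;> simp_all

/-- Edge-identification: delete `e1` and `e2` (with endpoints `u1, v1` resp.
`u2, v2`) and add the new edges `u1u2` and `v1v2`. -/
def edgeIdent (G1 G2 : MGraph) (e1 : G1.E) (e2 : G2.E)
    (u1 v1 : G1.V) (u2 v2 : G2.V) : MGraph where
  V := G1.V ⊕ G2.V
  E := {e : G1.E // e ≠ e1} ⊕ {e : G2.E // e ≠ e2} ⊕ Bool
  finV := by have := G1.finV; have := G2.finV; infer_instance
  finE := by have := G1.finE; have := G2.finE; infer_instance
  ends := fun e =>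
    match e with
    | Sum.inl e => (G1.ends e.1).map Sum.inl
    | Sum.inr (Sum.inl e) => (G2.ends e.1).map Sum.inr
    | Sum.inr (Sum.inr true) => s(Sum.inl u1, Sum.inr u2)
    | Sum.inr (Sum.inr false) => s(Sum.inl v1, Sum.inr v2)
  noLoop := by
    rintro (e | e | b) h
    · exact G1.noLoop e.1 ((Sym2.isDiag_map Sum.inl_injective).mp h)
    · exact G2.noLoop e.1 ((Sym2.isDiag_map Sum.inr_injective).mp h)
    · cases b <;> simp [Sym2.mk_isDiag_iff] at h

/-- Vertex-edge-identification: identify `v1` with `v2`, delete `e1 = u1v1`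
and `e2 = u2v2`, and add a new edge `u1u2`. -/
noncomputable def vertexEdgeIdent (G1 G2 : MGraph) (e1 : G1.E) (e2 : G2.E)
    (u1 v1 : G1.V) (u2 v2 : G2.V) (h2 : G2.ends e2 = s(u2, v2)) : MGraph where
  V := G1.V ⊕ {w : G2.V // w ≠ v2}
  E := {e : G1.E // e ≠ e1} ⊕ {e : G2.E // e ≠ e2} ⊕ Unit
  finV := by have := G1.finV; have := G2.finV; infer_instance
  finE := by have := G1.finE; have := G2.finE; infer_instance
  ends := fun e =>
    match e with
    | Sum.inl e => (G1.ends e.1).map Sum.inl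
    | Sum.inr (Sum.inl e) => (G2.ends e.1).map
        (fun w => if h : w = v2 then Sum.inl v1 else Sum.inr ⟨w, h⟩)
    | Sum.inr (Sum.inr _) =>
        s(Sum.inl u1, Sum.inr ⟨u2, fun h =>
          G2.noLoop e2 (by rw [h2, h]; exact Sym2.mk_isDiag_iff.mpr rfl)⟩)
  noLoop := by
    rintro (e | e | u) h
    · exact G1.noLoop e.1 ((Sym2.isDiag_map Sum.inl_injective).mp h)
    · refine G2.noLoop e.1 ((Sym2.isDiag_map ?_).mp h)
      intro a b hab
      by_cases ha : a = v2 <;> by_cases hb : b = v2 <;>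
        simp [ha, hb] at hab ⊢ <;> simp_all
    · simp [Sym2.mk_isDiag_iff] at h

/-- Delete an edge from a multigraph. -/
def deleteEdge (G : MGraph) (e : G.E) : MGraph where
  V := G.V
  E := {f : G.E // f ≠ e}
  finV := G.finV
  finE := by have := G.finE; infer_instance
  ends := fun f => G.ends f.1
  noLoop := fun f => G.noLoop f.1

/-- `Sym2.pmap`-style map into a subtype. -/
noncomputable def sym2Pmap {α β : Type} {p : α → Prop} (f : ∀ a, p a → β)
    (s : Sym2 α) (h : ∀ a ∈ s, p a) : Sym2 β :=
  let z := Classical.choose (Quot.exists_rep s)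
  s(f z.1 (h z.1 (by
      have hz : Quot.mk _ z = s := Classical.choose_spec (Quot.exists_rep s)
      rw [← hz]; exact Sym2.mem_mk_left z.1 z.2)),
    f z.2 (h z.2 (by
      have hz : Quot.mk _ z = s := Classical.choose_spec (Quot.exists_rep s)
      rw [← hz]; exact Sym2.mem_mk_right z.1 z.2)))

/-- Delete a vertex (and all incident edges) from a multigraph. -/
noncomputable def deleteVertex (G : MGraph) (v : G.V) : MGraph where
  V := {w : G.V // w ≠ v}
  E := {e : G.E // v ∉ G.ends e}
  finV := by have := G.finV; infer_instance
  finE := by have := G.finE; infer_instance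
  ends := fun e => sym2Pmap (fun a ha => (⟨a, ha⟩ : {w : G.V // w ≠ v}))
    (G.ends e.1) (fun a ha hav => e.2 (hav ▸ ha))
  noLoop := by
    rintro ⟨e, he⟩ h
    apply G.noLoop e
    unfold sym2Pmap at h
    have hz : Quot.mk _ (Classical.choose (Quot.exists_rep (G.ends e))) = G.ends e :=
      Classical.choose_spec (Quot.exists_rep (G.ends e))
    rw [Sym2.mk_isDiag_iff] at h
    have : (Classical.choose (Quot.exists_rep (G.ends e))).1 =
        (Classical.choose (Quot.exists_rep (G.ends e))).2 := congrArg Subtype.val h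
    rw [← hz]
    exact Sym2.mk_isDiag_iff.mpr this

end MGraph

/-- A tree decomposition of a multigraph: a tree of bags covering all vertices
and edges such that the bags containing a given vertex form a subtree. -/
structure TreeDecomp (G : MGraph) where
  ι : Type
  t : SimpleGraph ι
  isTree : t.IsTree
  bag : ι → Set G.V
  covers_vertex : ∀ v : G.V, ∃ i, v ∈ bag i
  covers_edge : ∀ e : G.E, ∃ i, ∀ v ∈ G.ends e, v ∈ bag i
  bags_connected : ∀ v : G.V, (SimpleGraph.induce {i | v ∈ bag i} t).Connected

namespace MGraph

/-- The graph has treewidth at most `k`. -/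
def twLE (G : MGraph) (k : ℕ) : Prop :=
  ∃ T : TreeDecomp G, ∀ i, (T.bag i).ncard ≤ k + 1

/-- Treewidth of a multigraph. -/
noncomputable def treewidth (G : MGraph) : ℕ := sInf {k | G.twLE k}

/-- The closed necklace on `n ≥ 2` vertices: a cycle of length `n` with all
of its edges doubled. -/
def necklace (n : ℕ) (hn : 2 ≤ n) : MGraph where
  V := ZMod n
  E := ZMod n × Bool
  finV := by have : NeZero n := ⟨by omega⟩; infer_instance
  finE := by have : NeZero n := ⟨by omega⟩; infer_instance
  ends := fun e => s(e.1, e.1 + 1)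
  noLoop := by
    have : Fact (1 < n) := ⟨hn⟩
    intro e h
    rw [Sym2.mk_isDiag_iff] at h
    exact one_ne_zero (left_eq_add.mp h)

end MGraph

namespace MGraph

variable (G : MGraph)

/-- A trail in edge set `F` from `a` to `c`, with vertex list (after `a`) `vs`
and edge list `es`. -/
inductive Trail (F : Set G.E) : G.V → G.V → List G.V → List G.E → Prop
  | nil (v : G.V) : Trail F v v [] []
  | cons {a b c : G.V} {vs : List G.V} {es : List G.E} {e : G.E} :
      e ∈ F → G.ends e = s(a, b) → e ∉ es → Trail F b c vs es →
      Trail F a c (b :: vs) (e :: es)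

/-- Count of edges in a list incident to `v`. -/
noncomputable def cnt (v : G.V) (es : List G.E) : ℕ :=
  es.countP (fun e => decide (v ∈ G.ends e))

variable {G}

lemma Trail.subset {F : Set G.E} {a c vs es} (h : G.Trail F a c vs es) :
    ∀ e ∈ es, e ∈ F := by
  induction h with
  | nil => simp
  | cons hF he hne _ ih =>
    intro f hf
    rcases List.mem_cons.mp hf with rfl | hf
    · exact hF
    · exact ih f hf

lemma Trail.nodup {F : Set G.E} {a c vs es} (h : G.Trail F a c vs es) :
    es.Nodup := by
  induction h with
  | nil => simp
  | cons hF he hne _ ih => exact List.nodup_cons.mpr ⟨hne, ih⟩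

lemma Trail.length_eq {F : Set G.E} {a c vs es} (h : G.Trail F a c vs es) :
    vs.length = es.length := by
  induction h with
  | nil => rfl
  | cons _ _ _ _ ih => simp [ih]

lemma Trail.nil_iff {F : Set G.E} {a c vs es} (h : G.Trail F a c vs es) :
    vs = [] → a = c := by
  intro hvs; cases h with
  | nil => rfl
  | cons => simp at hvs

lemma Trail.ends_sub {F : Set G.E} {a c vs es} (h : G.Trail F a c vs es) :
    ∀ e ∈ es, ∀ x ∈ G.ends e, x ∈ a :: vs := by
  induction h with
  | nil => simp
  | cons hF he hne _ ih =>
    intro f hf x hx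
    rcases List.mem_cons.mp hf with rfl | hf
    · rw [he] at hx
      rcases Sym2.mem_iff.mp hx with rfl | rfl
      · exact List.mem_cons_self
      · exact List.mem_cons.mpr (Or.inr (List.mem_cons_self))
    · exact List.mem_cons.mpr (Or.inr (ih f hf x hx))

lemma Trail.cons_decomp {F : Set G.E} {a c vs es} (h : G.Trail F a c vs es) :
    a :: vs = (a :: vs).dropLast ++ [c] := by
  induction h with
  | nil => rfl
  | cons hF he hne ht ih =>
    rename_i a b c vs es e
    cases ht with
    | nil => rfl
    | cons hF' he' hne' ht' =>
      simp only [List.dropLast_cons_of_ne_nil (List.cons_ne_nil _ _)] at ih ⊢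
      rw [List.cons_append]
      exact congrArg _ ih

lemma Trail.append {F : Set G.E} {a b c vs1 vs2 es1 es2}
    (h1 : G.Trail F a b vs1 es1) (h2 : G.Trail F b c vs2 es2)
    (hdisj : ∀ e ∈ es1, e ∉ es2) :
    G.Trail F a c (vs1 ++ vs2) (es1 ++ es2) := by
  induction h1 with
  | nil => exact h2
  | cons hF he hne ht ih =>
    rename_i a' b' c' vs' es' e'
    refine Trail.cons hF he (fun hmem => ?_)
      (ih h2 (fun e he' => hdisj e (List.mem_cons.mpr (Or.inr he'))))
    rcases List.mem_append.mp hmem with h' | h'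
    · exact hne h'
    · exact hdisj e' (List.mem_cons_self) h' 

lemma Trail.reverse {F : Set G.E} {a c vs es} (h : G.Trail F a c vs es) :
    G.Trail F c a ((a :: vs).reverse.tail) es.reverse := by
  induction h with
  | nil v => simpa using Trail.nil (G := G) (F := F) v
  | cons hF he hne ht ih =>
    rename_i a b c vs es e
    have single : G.Trail F b a [a] [e] :=
      Trail.cons hF (by rw [he]; exact Sym2.eq_swap) (by simp) (Trail.nil a)
    have hdj : ∀ f ∈ es.reverse, f ∉ [e] := by
      intro f hf hf'
      simp only [List.mem_singleton] at hf'
      exact hne (hf' ▸ List.mem_reverse.mp hf)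
    have happ := ih.append single hdj
    have h1 : (a :: b :: vs).reverse.tail = (b :: vs).reverse.tail ++ [a] := by
      rw [List.reverse_cons (a := a), List.tail_append_of_ne_nil (by simp)]
    have h2 : (e :: es).reverse = es.reverse ++ [e] := by simp
    rw [h1, h2]
    exact happ


lemma Trail.mem_verts {F : Set G.E} {a c vs es} (h : G.Trail F a c vs es)
    (hne : es ≠ []) : ∀ x ∈ a :: vs, ∃ e ∈ es, x ∈ G.ends e := by
  induction h with
  | nil => exact absurd rfl hne
  | cons hF he hne' ht ih =>
    rename_i a b c vs es e
    intro x hx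
    rcases List.mem_cons.mp hx with rfl | hx
    · exact ⟨e, List.mem_cons_self, by rw [he]; exact Sym2.mem_mk_left _ _⟩
    · by_cases hes : es = []
      · subst hes
        cases ht with
        | nil =>
          simp only [List.mem_singleton] at hx
          subst hx
          exact ⟨e, List.mem_cons_self, by rw [he]; exact Sym2.mem_mk_right _ _⟩
      · obtain ⟨f, hf, hxf⟩ := ih hes x hx
        exact ⟨f, List.mem_cons.mpr (Or.inr hf), hxf⟩

lemma Trail.not_mem_verts {F : Set G.E} {a c vs es} (h : G.Trail F a c vs es)
    {v} (hva : v ≠ a) (hvs : v ∉ vs) : ∀ e ∈ es, v ∉ G.ends e := by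
  intro e he hv
  rcases List.mem_cons.mp (h.ends_sub e he v hv) with rfl | h'
  · exact absurd rfl hva
  · exact hvs h'

lemma Trail.first_mem {F : Set G.E} {a c vs e es} (h : G.Trail F a c vs (e :: es)) :
    a ∈ G.ends e := by
  cases h with
  | cons hF he hne ht => rw [he]; exact Sym2.mem_mk_left _ _

lemma Trail.last_mem {F : Set G.E} {a c vs es} (h : G.Trail F a c vs es)
    (hne : es ≠ []) : ∃ e ∈ es, c ∈ G.ends e := by
  have hr := h.reverse
  rcases hrev : es.reverse with _ | ⟨f, t⟩
  · exact absurd (by simpa using congrArg List.reverse hrev) hne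
  · rw [hrev] at hr
    refine ⟨f, List.mem_reverse.mp (hrev ▸ List.mem_cons_self), hr.first_mem⟩

lemma Trail.splitAt {F : Set G.E} {v : G.V} :
    ∀ (vs1 : List G.V) {a c : G.V} {vs vs2 : List G.V} {es : List G.E},
      G.Trail F a c vs es → vs = vs1 ++ v :: vs2 →
      ∃ es1 es2, es = es1 ++ es2 ∧ es1.length = vs1.length + 1 ∧
        G.Trail F a v (vs1 ++ [v]) es1 ∧ G.Trail F v c vs2 es2 := by
  intro vs1
  induction vs1 with
  | nil =>
    intro a c vs vs2 es h hvs
    subst hvs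
    cases h with
    | cons hF he hne ht =>
      exact ⟨[_], _, rfl, rfl, Trail.cons hF he (by simp) (Trail.nil v), ht⟩
  | cons x t ih =>
    intro a c vs vs2 es h hvs
    subst hvs
    cases h with
    | cons hF he hne ht =>
      obtain ⟨es1, es2, rfl, hlen, t1, t2⟩ := ih ht rfl
      refine ⟨_ :: es1, es2, rfl, by simp [hlen], ?_, t2⟩
      exact Trail.cons hF he (fun hmem => hne (List.mem_append.mpr (Or.inl hmem))) t1

lemma cnt_cons (v : G.V) (e : G.E) (es : List G.E) :
    G.cnt v (e :: es) = G.cnt v es + if v ∈ G.ends e then 1 else 0 := by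
  simp only [cnt, List.countP_cons, decide_eq_true_eq]

lemma cnt_append (v : G.V) (es1 es2 : List G.E) :
    G.cnt v (es1 ++ es2) = G.cnt v es1 + G.cnt v es2 :=
  List.countP_append

lemma cnt_eq_zero {v : G.V} {es : List G.E} (h : ∀ e ∈ es, v ∉ G.ends e) :
    G.cnt v es = 0 := by
  simp only [cnt, List.countP_eq_zero, decide_eq_true_eq]
  exact h

lemma cnt_eq_ncard {es : List G.E} (hnd : es.Nodup) (v : G.V) :
    {e | e ∈ es ∧ v ∈ G.ends e}.ncard = G.cnt v es := by
  classical
  have hset : {e | e ∈ es ∧ v ∈ G.ends e} =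
      ↑((es.filter (fun e => decide (v ∈ G.ends e))).toFinset) := by
    ext e
    simp [List.mem_filter]
  rw [hset, Set.ncard_coe_finset, List.toFinset_card_of_nodup (hnd.filter _),
    cnt, List.countP_eq_length_filter]

lemma Trail.cnt_parity {F : Set G.E} {a c vs es} (h : G.Trail F a c vs es)
    (v : G.V) : Even (G.cnt v es) ↔ (v = a ↔ v = c) := by
  induction h with
  | nil => simp [cnt]
  | cons hF he hne ht ih =>
    rename_i a b c vs es e
    have hab : a ≠ b := fun hab => G.noLoop e (by
      rw [he, hab]; exact Sym2.mk_isDiag_iff.mpr rfl)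
    rw [G.cnt_cons]
    by_cases hv : v ∈ G.ends e
    · rw [if_pos hv, Nat.even_add_one, ih]
      have hv' : v = a ∨ v = b := by
        rw [he] at hv; exact Sym2.mem_iff.mp hv
      rcases hv' with rfl | rfl
      · simp [hab]
      · have : v ≠ a := fun hh => hab hh.symm
        simp [this]
    · have hva : v ≠ a := fun hh => hv (hh ▸ (he ▸ Sym2.mem_mk_left a b))
      have hvb : v ≠ b := fun hh => hv (hh ▸ (he ▸ Sym2.mem_mk_right a b))
      rw [if_neg hv, Nat.add_zero, ih]
      simp [hva, hvb]


lemma cnt_reverse (v : G.V) (es : List G.E) : G.cnt v es.reverse = G.cnt v es :=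
  by simp [cnt]

lemma degOn_union {A B : Set G.E} (hAB : Disjoint A B) (v : G.V) :
    G.degOn (A ∪ B) v = G.degOn A v + G.degOn B v := by
  haveI := G.finE
  unfold degOn
  rw [show {e | e ∈ A ∪ B ∧ v ∈ G.ends e} =
      {e | e ∈ A ∧ v ∈ G.ends e} ∪ {e | e ∈ B ∧ v ∈ G.ends e} by
    ext e; simp only [Set.mem_setOf_eq, Set.mem_union]; tauto]
  refine Set.ncard_union_eq ?_ (Set.toFinite _) (Set.toFinite _)
  rw [Set.disjoint_left]
  rintro e ⟨heA, -⟩ ⟨heB, -⟩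
  exact Set.disjoint_left.mp hAB heA heB

lemma degOn_sdiff_add {C F : Set G.E} (hCF : C ⊆ F) (v : G.V) :
    G.degOn F v = G.degOn C v + G.degOn (F \ C) v := by
  conv_lhs => rw [← Set.union_diff_cancel hCF]
  exact G.degOn_union Set.disjoint_sdiff_right v

lemma degOn_eq_zero {C : Set G.E} {v : G.V} (h : ∀ e ∈ C, v ∉ G.ends e) :
    G.degOn C v = 0 := by
  have hempty : {e | e ∈ C ∧ v ∈ G.ends e} = ∅ := by
    ext e
    simp only [Set.mem_setOf_eq, Set.mem_empty_iff_false, iff_false, not_and]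
    exact h e
  rw [degOn, hempty, Set.ncard_empty]

lemma mem_vertexSetOf_iff {C : Set G.E} {v : G.V} :
    v ∈ G.VertexSetOf C ↔ 0 < G.degOn C v := by
  haveI := G.finE
  rw [degOn, Set.ncard_pos (Set.toFinite _)]
  constructor
  · rintro ⟨e, heC, hve⟩; exact ⟨e, heC, hve⟩
  · rintro ⟨e, heC, hve⟩; exact ⟨e, heC, hve⟩

lemma cnt_le_degOn {C : Set G.E} {es : List G.E} (hnd : es.Nodup)
    (hsub : ∀ e ∈ es, e ∈ C) (v : G.V) : G.cnt v es ≤ G.degOn C v := by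
  haveI := G.finE
  rw [← G.cnt_eq_ncard hnd, degOn]
  exact Set.ncard_le_ncard (fun e ⟨he, hv⟩ => ⟨hsub e he, hv⟩) (Set.toFinite _)

lemma exists_first {α : Type} {p : α → Prop} :
    ∀ {l : List α}, (∃ x ∈ l, p x) →
      ∃ l1 x l2, l = l1 ++ x :: l2 ∧ p x ∧ ∀ y ∈ l1, ¬ p y := by
  intro l
  induction l with
  | nil => rintro ⟨x, hx, -⟩; simp at hx
  | cons a t ih =>
    intro hex
    by_cases hpa : p a
    · exact ⟨[], a, t, rfl, hpa, by simp⟩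
    · obtain ⟨x, hx, hpx⟩ := hex
      rcases List.mem_cons.mp hx with rfl | hx
      · exact absurd hpx hpa
      · obtain ⟨l1, x', l2, rfl, hpx', hl1⟩ := ih ⟨x, hx, hpx⟩
        refine ⟨a :: l1, x', l2, rfl, hpx', ?_⟩
        intro y hy
        rcases List.mem_cons.mp hy with rfl | hy
        · exact hpa
        · exact hl1 y hy

lemma Trail.cnt_last {F : Set G.E} {a c : G.V} {vs es}
    (h : G.Trail F a c vs es) : es ≠ [] → c ∉ (a :: vs).dropLast →
      G.cnt c es = 1 := by
  induction h with
  | nil => intro h'; exact absurd rfl h'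
  | cons hF he hne ht ih =>
    rename_i a b c vs es e
    intro _ hc
    by_cases hes : es = []
    · subst hes
      cases ht with
      | nil =>
        simp [G.cnt_cons, cnt, he]
    · have hvs : vs ≠ [] := by
        intro h'
        apply hes
        have hl := ht.length_eq
        rw [h'] at hl
        exact List.length_eq_zero_iff.mp hl.symm
      have hd : (a :: b :: vs).dropLast = a :: (b :: vs).dropLast :=
        List.dropLast_cons_of_ne_nil (List.cons_ne_nil _ _)
      rw [hd, List.mem_cons, not_or] at hc
      obtain ⟨hca, hc'⟩ := hc
      have hcb : c ≠ b := by
        have hdd : (b :: vs).dropLast = b :: vs.dropLast :=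
          List.dropLast_cons_of_ne_nil hvs
        rw [hdd] at hc'
        exact fun h' => hc' (h' ▸ List.mem_cons_self)
      have hnotin : c ∉ G.ends e := by
        intro hmem
        rw [he] at hmem
        rcases Sym2.mem_iff.mp hmem with h' | h'
        · exact hca h'
        · exact hcb h'
      rw [G.cnt_cons, ih hes hc', if_neg hnotin]

lemma Trail.cnt_first {F : Set G.E} {a c : G.V} {vs es}
    (h : G.Trail F a c vs es) (hne : es ≠ []) (hnd : a ∉ vs) :
    G.cnt a es = 1 := by
  have hr := h.reverse
  rw [← G.cnt_reverse]
  refine hr.cnt_last (by simpa using hne) ?_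
  have h1 : (a :: vs).reverse.tail = (a :: vs).dropLast.reverse := by
    conv_lhs => rw [h.cons_decomp]
    rw [List.reverse_append]
    rfl
  have h3 : c :: (a :: vs).dropLast.reverse = vs.reverse ++ [a] := by
    rw [show c :: (a :: vs).dropLast.reverse = ((a :: vs).dropLast ++ [c]).reverse by
      rw [List.reverse_append]; rfl, ← h.cons_decomp]
    simp
  rw [h1, h3, List.dropLast_concat, List.mem_reverse]
  exact hnd


lemma Trail.cnt_eq_two {F : Set G.E} {a : G.V} {vs es} (h : G.Trail F a a vs es)
    (hne : es ≠ []) (hnd : ((a :: vs).dropLast).Nodup) :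
    ∀ v ∈ a :: vs, G.cnt v es = 2 := by
  have hvs : vs ≠ [] := by
    intro h'
    apply hne
    have hl := h.length_eq
    rw [h'] at hl
    exact List.length_eq_zero_iff.mp hl.symm
  have hdca : (a :: vs).dropLast = a :: vs.dropLast :=
    List.dropLast_cons_of_ne_nil hvs
  rw [hdca, List.nodup_cons] at hnd
  obtain ⟨haNod, hndd⟩ := hnd
  have hvsdec : vs = vs.dropLast ++ [a] := by
    have h0 := h.cons_decomp
    rw [hdca, List.cons_append] at h0
    exact List.cons_injective h0
  intro v hv
  have hcase : v = a ∨ v ∈ vs.dropLast := by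
    rcases List.mem_cons.mp hv with rfl | hv'
    · exact Or.inl rfl
    · rw [hvsdec, List.mem_append, List.mem_singleton] at hv'
      tauto
  rcases hcase with rfl | hvd
  · -- v = a : base point
    cases h with
    | nil => exact absurd rfl hne
    | cons hF he hne' ht =>
      rename_i b vs' es' e
      have hes' : es' ≠ [] := by
        intro h'
        subst h'
        have hv0 : vs' = [] := List.length_eq_zero_iff.mp ht.length_eq
        subst hv0
        have hba := ht.nil_iff rfl
        subst hba
        exact G.noLoop e (by rw [he]; exact Sym2.mk_isDiag_iff.mpr rfl)
      have h1 : G.cnt v es' = 1 := ht.cnt_last hes' haNod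
      rw [G.cnt_cons, h1, if_pos (by rw [he]; exact Sym2.mem_mk_left _ _)]
  · have hva : v ≠ a := fun h' => haNod (h' ▸ hvd)
    have hvvs : v ∈ vs := (List.dropLast_sublist vs).subset hvd
    obtain ⟨l1, x, l2, hsplit, hx, hl1⟩ :=
      exists_first (p := fun y => v = y) ⟨v, hvvs, rfl⟩
    subst hx
    have hl2 : l2 ≠ [] := by
      intro h'
      subst h'
      rw [hsplit, List.dropLast_concat] at hvd
      exact hl1 v hvd rfl
    have hdl : vs.dropLast = l1 ++ v :: l2.dropLast := by
      rw [hsplit, List.dropLast_append_cons, List.dropLast_cons_of_ne_nil hl2]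
    obtain ⟨es1, es2, hes, hlen1, T1, T2⟩ := Trail.splitAt l1 h hsplit
    have hes1 : es1 ≠ [] := by
      intro h'
      rw [h'] at hlen1
      simp at hlen1
    have hes2 : es2 ≠ [] := by
      intro h'
      have hl := T2.length_eq
      rw [h'] at hl
      exact hl2 (List.length_eq_zero_iff.mp hl)
    have hc1 : v ∉ (a :: (l1 ++ [v])).dropLast := by
      rw [show a :: (l1 ++ [v]) = (a :: l1) ++ [v] by rfl, List.dropLast_concat]
      intro hmem
      rcases List.mem_cons.mp hmem with h' | h'
      · exact hva h'
      · exact hl1 v h' rfl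
    have hl2dec : l2 = l2.dropLast ++ [a] := by
      have h0 : l1 ++ v :: l2 = l1 ++ v :: (l2.dropLast ++ [a]) := by
        rw [← hsplit]
        conv_lhs => rw [hvsdec, hdl]
        simp
      exact List.cons_injective (List.append_cancel_left h0)
    have hndd' : (l1 ++ v :: l2.dropLast).Nodup := by
      rw [← hdl]
      exact hndd
    have hvl2 : v ∉ l2 := by
      rw [hl2dec]
      intro hmem
      rcases List.mem_append.mp hmem with h' | h'
      · have hsubnd : (v :: l2.dropLast).Nodup :=
          hndd'.sublist (List.sublist_append_right _ _)
        exact (List.nodup_cons.mp hsubnd).1 h'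
      · exact hva (List.mem_singleton.mp h')
    rw [hes, G.cnt_append, T1.cnt_last hes1 hc1, T2.cnt_first hes2 hvl2]



lemma adjOn_symm {F : Set G.E} {x y : G.V} (h : G.AdjOn F x y) : G.AdjOn F y x := by
  obtain ⟨e, he, hends⟩ := h
  exact ⟨e, he, by rw [hends]; exact Sym2.eq_swap⟩

lemma reachOn_symm {F : Set G.E} {x y : G.V} (h : G.ReachOn F x y) :
    G.ReachOn F y x := by
  induction h with
  | refl => exact Relation.ReflTransGen.refl
  | tail hxy hyz ih => exact Relation.ReflTransGen.head (adjOn_symm hyz) ih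

lemma reachOn_mono {F F' : Set G.E} (hFF : F ⊆ F') {x y : G.V}
    (h : G.ReachOn F x y) : G.ReachOn F' x y := by
  induction h with
  | refl => exact Relation.ReflTransGen.refl
  | tail _ hab ih =>
    obtain ⟨e, he, hd⟩ := hab
    exact ih.tail ⟨e, hFF he, hd⟩

lemma Trail.reach {F : Set G.E} {a c : G.V} {vs es} (h : G.Trail F a c vs es) :
    ∀ x ∈ a :: vs, G.ReachOn {e | e ∈ es} a x := by
  induction h with
  | nil =>
    intro x hx
    simp only [List.mem_singleton] at hx
    subst hx
    exact Relation.ReflTransGen.refl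
  | cons hF he hne ht ih =>
    rename_i a b c vs es e
    intro x hx
    rcases List.mem_cons.mp hx with rfl | hx
    · exact Relation.ReflTransGen.refl
    · have step : G.AdjOn {f | f ∈ e :: es} a b := ⟨e, List.mem_cons_self, he⟩
      have tl := reachOn_mono (show {f | f ∈ es} ⊆ {f | f ∈ e :: es} from
        fun f hf => List.mem_cons.mpr (Or.inr hf)) (ih x hx)
      exact Relation.ReflTransGen.head step tl

lemma Trail.isCycle {F : Set G.E} {a : G.V} {vs es} (h : G.Trail F a a vs es)
    (hne : es ≠ []) (hnd : ((a :: vs).dropLast).Nodup) :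
    G.IsCycle {e | e ∈ es} := by
  refine ⟨?_, ?_, ?_⟩
  · rcases es with _ | ⟨e, es'⟩
    · exact absurd rfl hne
    · exact ⟨e, List.mem_cons_self⟩
  · intro v
    by_cases hv : v ∈ a :: vs
    · right
      have hdef : G.degOn {e | e ∈ es} v = {e | e ∈ es ∧ v ∈ G.ends e}.ncard := rfl
      rw [hdef, G.cnt_eq_ncard h.nodup, h.cnt_eq_two hne hnd v hv]
    · left
      exact G.degOn_eq_zero (h.not_mem_verts (fun h' => hv (h' ▸ List.mem_cons_self))
        (fun h' => hv (List.mem_cons.mpr (Or.inr h'))))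
  · intro e heC f hfC x y hx hy
    exact Relation.ReflTransGen.trans
      (reachOn_symm (h.reach x (h.ends_sub e heC x hx)))
      (h.reach y (h.ends_sub f hfC y hy))

lemma Trail.closed_cnt_ge {F : Set G.E} {a : G.V} {vs es}
    (h : G.Trail F a a vs es) (hne : es ≠ []) : 2 ≤ G.cnt a es := by
  cases h with
  | nil => exact absurd rfl hne
  | cons hF he hne' ht =>
    rename_i b vs' es' e
    have hes' : es' ≠ [] := by
      intro h'
      subst h'
      have hv0 : vs' = [] := List.length_eq_zero_iff.mp ht.length_eq
      subst hv0
      have hba := ht.nil_iff rfl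
      subst hba
      exact G.noLoop e (by rw [he]; exact Sym2.mk_isDiag_iff.mpr rfl)
    obtain ⟨f, hf, haf⟩ := ht.last_mem hes'
    have h1 : 0 < G.cnt a es' := by
      rw [cnt]
      exact List.countP_pos_iff.mpr ⟨f, hf, by simpa using haf⟩
    rw [G.cnt_cons, if_pos (by rw [he]; exact Sym2.mem_mk_left _ _)]
    omega

lemma Trail.closed_dup_shorter {F : Set G.E} {a : G.V} {vs es}
    (h : G.Trail F a a vs es) (hne : es ≠ [])
    (hdup : ¬ ((a :: vs).dropLast).Nodup) :
    ∃ b vs' es', G.Trail F b b vs' es' ∧ es' ≠ [] ∧ es'.length < es.length := by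
  have hvs : vs ≠ [] := by
    intro h'
    apply hne
    have hl := h.length_eq
    rw [h'] at hl
    exact List.length_eq_zero_iff.mp hl.symm
  have hdca : (a :: vs).dropLast = a :: vs.dropLast :=
    List.dropLast_cons_of_ne_nil hvs
  rw [hdca, List.nodup_cons] at hdup
  push_neg at hdup
  by_cases ha : a ∈ vs.dropLast
  · -- split at first occurrence of a
    obtain ⟨l1, x, l2, hsplit, hx, hl1⟩ :=
      exists_first (p := fun y => a = y) ⟨a, (List.dropLast_sublist vs).subset ha, rfl⟩
    subst hx
    have hl2 : l2 ≠ [] := by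
      intro h'
      subst h'
      rw [hsplit, List.dropLast_concat] at ha
      exact hl1 a ha rfl
    obtain ⟨es1, es2, hes, hlen1, T1, T2⟩ := Trail.splitAt l1 h hsplit
    have hes1 : es1 ≠ [] := by
      intro h'
      rw [h'] at hlen1
      simp at hlen1
    have hes2 : es2 ≠ [] := by
      intro h'
      have hl := T2.length_eq
      rw [h'] at hl
      exact hl2 (List.length_eq_zero_iff.mp hl)
    refine ⟨a, l1 ++ [a], es1, T1, hes1, ?_⟩
    rw [hes, List.length_append]
    have : 0 < es2.length := List.length_pos_iff.mpr hes2
    omega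
  · -- duplicate in vs.dropLast
    have hnodup := hdup ha
    have hv2ex : ∃ v, 2 ≤ List.count v vs.dropLast := by
      by_contra hno
      push_neg at hno
      exact hnodup (List.nodup_iff_count_le_one.mpr fun x => by
        have := hno x
        omega)
    obtain ⟨v, hv2⟩ := hv2ex
    have hva : v ≠ a := by
      intro h'
      subst h'
      exact ha (List.count_pos_iff.mp (by omega))
    have hvvs : v ∈ vs := (List.dropLast_sublist vs).subset
      (List.count_pos_iff.mp (by omega))
    obtain ⟨l1, x, l2, hsplit, hx, hl1⟩ :=
      exists_first (p := fun y => v = y) ⟨v, hvvs, rfl⟩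
    subst hx
    have hvl2 : v ∈ l2 := by
      have hcount : List.count v vs.dropLast ≤ List.count v vs :=
        (List.dropLast_sublist vs).count_le _
      have hvsc : List.count v vs = List.count v l1 + 1 + List.count v l2 := by
        rw [hsplit]
        simp [List.count_append, List.count_cons]
        omega
      have hcl1 : List.count v l1 = 0 := by
        rw [List.count_eq_zero]
        intro hmem
        exact hl1 v hmem rfl
      have : 1 ≤ List.count v l2 := by omega
      exact List.count_pos_iff.mp (by omega)
    obtain ⟨es1, es2, hes, hlen1, T1, T2⟩ := Trail.splitAt l1 h hsplit
    obtain ⟨m1, y, m2, hsplit2, hy, hm1⟩ :=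
      exists_first (p := fun z => v = z) ⟨v, hvl2, rfl⟩
    subst hy
    obtain ⟨es21, es22, hes2, hlen21, T21, T22⟩ := Trail.splitAt m1 T2 hsplit2
    have hes21 : es21 ≠ [] := by
      intro h'
      rw [h'] at hlen21
      simp at hlen21
    have hes1 : es1 ≠ [] := by
      intro h'
      rw [h'] at hlen1
      simp at hlen1
    refine ⟨v, m1 ++ [v], es21, T21, hes21, ?_⟩
    rw [hes, hes2]
    simp only [List.length_append]
    have h1 : 0 < es1.length := List.length_pos_iff.mpr hes1
    omega


lemma Trail.extend {F : Set G.E} :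
    ∀ (n : ℕ) {b c : G.V} {vs : List G.V} {es : List G.E}, G.Trail F b c vs es →
      (F \ {e | e ∈ es}).ncard ≤ n →
      ∃ b' vs' es₀ es', es' = es₀ ++ es ∧ G.Trail F b' c vs' es' ∧
        ∀ e ∈ F, b' ∈ G.ends e → e ∈ es' := by
  haveI := G.finE
  intro n
  induction n with
  | zero =>
    intro b c vs es h hn
    refine ⟨b, vs, [], es, rfl, h, ?_⟩
    intro e heF hbe
    by_contra hnot
    have hmem : e ∈ F \ {e | e ∈ es} := ⟨heF, hnot⟩
    have hpos : 0 < (F \ {e | e ∈ es}).ncard :=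
      (Set.ncard_pos (Set.toFinite _)).mpr ⟨e, hmem⟩
    omega
  | succ n ih =>
    intro b c vs es h hn
    by_cases hstuck : ∀ e ∈ F, b ∈ G.ends e → e ∈ es
    · exact ⟨b, vs, [], es, rfl, h, hstuck⟩
    · push_neg at hstuck
      obtain ⟨e, heF, hbe, hnotin⟩ := hstuck
      obtain ⟨b', hends⟩ := Sym2.mem_iff_exists.mp hbe
      have h' : G.Trail F b' c (b :: vs) (e :: es) :=
        Trail.cons heF (by rw [hends]; exact Sym2.eq_swap) hnotin h
      have hmeas : (F \ {f | f ∈ e :: es}).ncard ≤ n := by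
        have hss : F \ {f | f ∈ e :: es} ⊂ F \ {f | f ∈ es} := by
          constructor
          · intro f ⟨hfF, hfnot⟩
            exact ⟨hfF, fun hmem => hfnot (List.mem_cons.mpr (Or.inr hmem))⟩
          · intro hsub
            have : e ∈ F \ {f | f ∈ es} := ⟨heF, hnotin⟩
            have := hsub this
            exact this.2 (List.mem_cons_self)
        have := Set.ncard_lt_ncard hss (Set.toFinite _)
        omega
      obtain ⟨b'', vs'', es₀, es'', heq, htr, hst⟩ := ih h' hmeas
      exact ⟨b'', vs'', es₀ ++ [e], es'', by rw [heq]; simp, htr, hst⟩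

lemma exists_closed_trail {F : Set G.E} (heven : ∀ v, Even (G.degOn F v))
    {u : G.V} (hu : 0 < G.degOn F u) :
    ∃ vs es, G.Trail F u u vs es ∧ es ≠ [] ∧
      ∀ e ∈ F, u ∈ G.ends e → e ∈ es := by
  haveI := G.finE
  obtain ⟨e, heF, hue⟩ := (Set.ncard_pos (Set.toFinite _)).mp hu
  obtain ⟨w, hends⟩ := Sym2.mem_iff_exists.mp hue
  have h0 : G.Trail F w u [u] [e] :=
    Trail.cons heF (by rw [hends]; exact Sym2.eq_swap) (by simp) (Trail.nil u)
  obtain ⟨b', vs', es₀, es', heq, htr, hst⟩ :=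
    Trail.extend (F \ {f | f ∈ [e]}).ncard h0 le_rfl
  have hene : es' ≠ [] := by
    rw [heq]
    simp
  have hclosed : b' = u := by
    have hseteq : {f | f ∈ F ∧ b' ∈ G.ends f} = {f | f ∈ es' ∧ b' ∈ G.ends f} := by
      ext f
      exact ⟨fun ⟨h1, h2⟩ => ⟨hst f h1 h2, h2⟩, fun ⟨h1, h2⟩ => ⟨htr.subset f h1, h2⟩⟩
    have hdeg : G.degOn F b' = G.cnt b' es' := by
      rw [degOn, hseteq, G.cnt_eq_ncard htr.nodup]
    have heven' : Even (G.cnt b' es') := hdeg ▸ heven b'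
    have := (htr.cnt_parity b').mp heven'
    exact this.mp rfl
  subst hclosed
  refine ⟨vs', es', htr, hene, ?_⟩
  intro f hf hbf
  exact hst f hf hbf

lemma exists_cycle_subset {F : Set G.E} (heven : ∀ v, Even (G.degOn F v))
    (hFne : F.Nonempty) :
    ∃ C, G.IsCycle C ∧ C ⊆ F ∧ C.Nonempty := by
  haveI := G.finE
  obtain ⟨e, heF⟩ := hFne
  have hu : 0 < G.degOn F (G.ends e).out.1 := by
    rw [degOn]
    exact (Set.ncard_pos (Set.toFinite _)).mpr ⟨e, heF, Sym2.out_fst_mem _⟩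
  obtain ⟨vs0, es0, htr0, hne0, -⟩ := exists_closed_trail heven hu
  -- minimal closed trail
  set S := {n | ∃ a vs es, G.Trail F a a vs es ∧ es ≠ [] ∧ es.length = n} with hS
  have hSne : S.Nonempty := ⟨es0.length, _, _, _, htr0, hne0, rfl⟩
  obtain ⟨a, vs, es, htr, hne, hlen⟩ := Nat.sInf_mem hSne
  have hnd : ((a :: vs).dropLast).Nodup := by
    by_contra hdup
    obtain ⟨b, vs', es', htr', hne', hlt⟩ := htr.closed_dup_shorter hne hdup
    have hmem : es'.length ∈ S := ⟨b, vs', es', htr', hne', rfl⟩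
    have := Nat.sInf_le hmem
    omega
  exact ⟨{f | f ∈ es}, htr.isCycle hne hnd, fun f hf => htr.subset f hf,
    by rcases es with _ | ⟨f, t⟩; exact absurd rfl hne; exact ⟨f, List.mem_cons_self⟩⟩

lemma isCycle_even_deg {C : Set G.E} (h : G.IsCycle C) (v : G.V) :
    Even (G.degOn C v) := by
  rcases h.2.1 v with h' | h' <;> rw [h'] <;> decide

lemma exists_cycle_decompOn :
    ∀ (n : ℕ) (F : Set G.E), F.ncard ≤ n → (∀ v, Even (G.degOn F v)) →
      ∃ D, G.IsCycleDecompOn F D ∧ ∀ C ∈ D, C.Nonempty := by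
  haveI := G.finE
  intro n
  induction n with
  | zero =>
    intro F hn _
    have hF : F = ∅ := (Set.ncard_eq_zero (Set.toFinite F)).mp (by omega)
    subst hF
    refine ⟨∅, ⟨?_, ?_⟩, ?_⟩
    · intro C hC
      exact absurd hC (Set.notMem_empty C)
    · intro e he
      exact absurd he (Set.notMem_empty e)
    · intro C hC
      exact absurd hC (Set.notMem_empty C)
  | succ n ih =>
    intro F hn heven
    by_cases hFne : F = ∅
    · subst hFne
      refine ⟨∅, ⟨?_, ?_⟩, ?_⟩
      · intro C hC
        exact absurd hC (Set.notMem_empty C)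
      · intro e he
        exact absurd he (Set.notMem_empty e)
      · intro C hC
        exact absurd hC (Set.notMem_empty C)
    · obtain ⟨C, hCcyc, hCF, hCne⟩ :=
        exists_cycle_subset heven (Set.nonempty_iff_ne_empty.mpr hFne)
      have heven' : ∀ v, Even (G.degOn (F \ C) v) := by
        intro v
        have hadd := G.degOn_sdiff_add hCF v
        have h1 := heven v
        have h2 := isCycle_even_deg hCcyc v
        rw [Nat.even_iff] at *
        omega
      have hlt : (F \ C).ncard < F.ncard := by
        refine Set.ncard_lt_ncard ?_ (Set.toFinite _)
        obtain ⟨c0, hc0⟩ := hCne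
        exact (Set.ssubset_iff_of_subset Set.diff_subset).mpr
          ⟨c0, hCF hc0, fun h' => h'.2 hc0⟩
      obtain ⟨D, ⟨hD1, hD2⟩, hDne⟩ := ih (F \ C) (by omega) heven'
      have hCnotin : C ∉ D := by
        intro hmem
        obtain ⟨c0, hc0⟩ := hCne
        exact ((hD1 C hmem).2 hc0).2 hc0
      refine ⟨insert C D, ⟨?_, ?_⟩, ?_⟩
      · intro C' hC'
        rcases Set.mem_insert_iff.mp hC' with rfl | hC'
        · exact ⟨hCcyc, hCF⟩
        · exact ⟨(hD1 C' hC').1, fun e he => ((hD1 C' hC').2 he).1⟩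
      · intro e heF
        by_cases heC : e ∈ C
        · refine ⟨C, ⟨Set.mem_insert _ _, heC⟩, ?_⟩
          rintro C' ⟨hC'mem, heC'⟩
          rcases Set.mem_insert_iff.mp hC'mem with rfl | hC'
          · rfl
          · exact absurd ((hD1 C' hC').2 heC').2 (not_not.mpr heC)
        · obtain ⟨C', ⟨hC'D, heC'⟩, huniq⟩ := hD2 e ⟨heF, heC⟩
          refine ⟨C', ⟨Set.mem_insert_of_mem _ hC'D, heC'⟩, ?_⟩
          rintro C'' ⟨hC''mem, heC''⟩
          rcases Set.mem_insert_iff.mp hC''mem with rfl | hC''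
          · exact absurd heC'' heC
          · exact huniq C'' ⟨hC'', heC''⟩
      · intro C' hC'
        rcases Set.mem_insert_iff.mp hC' with rfl | hC'
        · exact hCne
        · exact hDne C' hC'


lemma cnt_pos_of_mem {v : G.V} {es : List G.E} {f : G.E} (hf : f ∈ es)
    (hv : v ∈ G.ends f) : 1 ≤ G.cnt v es := by
  rw [cnt]
  exact List.countP_pos_iff.mpr ⟨f, hf, by simpa using hv⟩

lemma Trail.closed_nodup {F : Set G.E} {a : G.V} {vs es}
    (h : G.Trail F a a vs es) (hne : es ≠ [])
    (hcnt : ∀ x, G.cnt x es ≤ 2) : ((a :: vs).dropLast).Nodup := by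
  by_contra hdup
  have hvs : vs ≠ [] := by
    intro h'
    apply hne
    have hl := h.length_eq
    rw [h'] at hl
    exact List.length_eq_zero_iff.mp hl.symm
  have hdca : (a :: vs).dropLast = a :: vs.dropLast :=
    List.dropLast_cons_of_ne_nil hvs
  rw [hdca, List.nodup_cons] at hdup
  push_neg at hdup
  by_cases ha : a ∈ vs.dropLast
  · obtain ⟨l1, x, l2, hsplit, hx, hl1⟩ :=
      exists_first (p := fun y => a = y) ⟨a, (List.dropLast_sublist vs).subset ha, rfl⟩
    subst hx
    have hl2 : l2 ≠ [] := by
      intro h'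
      subst h'
      rw [hsplit, List.dropLast_concat] at ha
      exact hl1 a ha rfl
    obtain ⟨es1, es2, hes, hlen1, T1, T2⟩ := Trail.splitAt l1 h hsplit
    have hes1 : es1 ≠ [] := by
      intro h'
      rw [h'] at hlen1
      simp at hlen1
    have hes2 : es2 ≠ [] := by
      intro h'
      have hl := T2.length_eq
      rw [h'] at hl
      exact hl2 (List.length_eq_zero_iff.mp hl)
    have hc1 : 2 ≤ G.cnt a es1 := T1.closed_cnt_ge hes1
    have hc2 : 1 ≤ G.cnt a es2 := by
      rcases es2 with _ | ⟨f, t⟩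
      · exact absurd rfl hes2
      · exact G.cnt_pos_of_mem (List.mem_cons_self) T2.first_mem
    have := hcnt a
    rw [hes, G.cnt_append] at this
    omega
  · have hnodup := hdup ha
    have hv2ex : ∃ v, 2 ≤ List.count v vs.dropLast := by
      by_contra hno
      push_neg at hno
      exact hnodup (List.nodup_iff_count_le_one.mpr fun x => by
        have := hno x
        omega)
    obtain ⟨v, hv2⟩ := hv2ex
    have hva : v ≠ a := by
      intro h'
      subst h'
      exact ha (List.count_pos_iff.mp (by omega))
    have hvvs : v ∈ vs := (List.dropLast_sublist vs).subset
      (List.count_pos_iff.mp (by omega))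
    obtain ⟨l1, x, l2, hsplit, hx, hl1⟩ :=
      exists_first (p := fun y => v = y) ⟨v, hvvs, rfl⟩
    subst hx
    have hvl2 : v ∈ l2 := by
      have hcount : List.count v vs.dropLast ≤ List.count v vs :=
        (List.dropLast_sublist vs).count_le _
      have hvsc : List.count v vs = List.count v l1 + 1 + List.count v l2 := by
        rw [hsplit]
        simp [List.count_append, List.count_cons]
        omega
      have hcl1 : List.count v l1 = 0 := by
        rw [List.count_eq_zero]
        intro hmem
        exact hl1 v hmem rfl
      exact List.count_pos_iff.mp (by omega)
    obtain ⟨es1, es2, hes, hlen1, T1, T2⟩ := Trail.splitAt l1 h hsplit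
    obtain ⟨m1, y, m2, hsplit2, hy, hm1⟩ :=
      exists_first (p := fun z => v = z) ⟨v, hvl2, rfl⟩
    subst hy
    obtain ⟨es21, es22, hes2, hlen21, T21, T22⟩ := Trail.splitAt m1 T2 hsplit2
    have hes21 : es21 ≠ [] := by
      intro h'
      rw [h'] at hlen21
      simp at hlen21
    have hes1 : es1 ≠ [] := by
      intro h'
      rw [h'] at hlen1
      simp at hlen1
    have hc1 : 2 ≤ G.cnt v es21 := T21.closed_cnt_ge hes21
    obtain ⟨f, hf, hvf⟩ := T1.last_mem hes1
    have hc2 : 1 ≤ G.cnt v es1 := G.cnt_pos_of_mem hf hvf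
    have := hcnt v
    rw [hes, hes2, G.cnt_append, G.cnt_append] at this
    omega

lemma Trail.mono {F F' : Set G.E} (hFF : F ⊆ F') {a c : G.V} {vs es}
    (h : G.Trail F a c vs es) : G.Trail F' a c vs es := by
  induction h with
  | nil v => exact Trail.nil v
  | cons hF he hne ht ih => exact Trail.cons (hFF hF) he hne ih

lemma IsCycle.exists_rep {C : Set G.E} (hcyc : G.IsCycle C) {u : G.V}
    (hu : u ∈ G.VertexSetOf C) :
    ∃ vs es, G.Trail C u u vs es ∧ es ≠ [] ∧ (∀ e, e ∈ C ↔ e ∈ es) ∧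
      ((u :: vs).dropLast).Nodup := by
  haveI := G.finE
  obtain ⟨vs, es, htr, hne, hstuck⟩ :=
    exists_closed_trail (isCycle_even_deg hcyc) (mem_vertexSetOf_iff.mp hu)
  have hcnt_le : ∀ x, G.cnt x es ≤ 2 := by
    intro x
    refine le_trans (G.cnt_le_degOn htr.nodup htr.subset x) ?_
    rcases hcyc.2.1 x with h' | h' <;> omega
  have hnd := htr.closed_nodup hne hcnt_le
  have hvis2 : ∀ x ∈ u :: vs, G.cnt x es = 2 := htr.cnt_eq_two hne hnd
  have hedge_closed : ∀ x ∈ u :: vs, ∀ f ∈ C, x ∈ G.ends f → f ∈ es := by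
    intro x hx f hfC hxf
    by_contra hnot
    have hsub : insert f {e | e ∈ es ∧ x ∈ G.ends e} ⊆ {e | e ∈ C ∧ x ∈ G.ends e} := by
      rintro g hg
      rcases Set.mem_insert_iff.mp hg with rfl | ⟨hg1, hg2⟩
      · exact ⟨hfC, hxf⟩
      · exact ⟨htr.subset g hg1, hg2⟩
    have hfnot : f ∉ {e | e ∈ es ∧ x ∈ G.ends e} := fun hmem => hnot hmem.1
    have hcard : (insert f {e | e ∈ es ∧ x ∈ G.ends e}).ncard =
        {e | e ∈ es ∧ x ∈ G.ends e}.ncard + 1 :=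
      Set.ncard_insert_of_notMem hfnot (Set.toFinite _)
    have hle := Set.ncard_le_ncard hsub (Set.toFinite _)
    have hdle : {e | e ∈ C ∧ x ∈ G.ends e}.ncard ≤ 2 := by
      rcases hcyc.2.1 x with h' | h' <;> rw [degOn] at h' <;> omega
    rw [hcard, G.cnt_eq_ncard htr.nodup, hvis2 x hx] at hle
    omega
  have hvismem : ∀ p q, G.ReachOn C p q → p ∈ u :: vs → q ∈ u :: vs := by
    intro p q hpq
    induction hpq with
    | refl => exact id
    | tail hpr hrq ih =>
      intro hp
      have hr := ih hp
      obtain ⟨g, hgC, hends⟩ := hrq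
      have hg := hedge_closed _ hr g hgC (by rw [hends]; exact Sym2.mem_mk_left _ _)
      exact htr.ends_sub g hg _ (by rw [hends]; exact Sym2.mem_mk_right _ _)
  have hcover : ∀ f ∈ C, f ∈ es := by
    intro f hfC
    rcases hes0 : es with _ | ⟨e0, rest⟩
    · exact absurd hes0 hne
    · have he0C : e0 ∈ C := htr.subset e0 (hes0 ▸ List.mem_cons_self)
      have hue0 : u ∈ G.ends e0 := by
        have htr' : G.Trail C u u vs (e0 :: rest) := hes0 ▸ htr
        exact htr'.first_mem
      have hreach : G.ReachOn C u (G.ends f).out.1 :=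
        hcyc.2.2 e0 he0C f hfC u _ hue0 (Sym2.out_fst_mem _)
      have hxvis : (G.ends f).out.1 ∈ u :: vs :=
        hvismem u _ hreach (List.mem_cons_self)
      rw [← hes0]
      exact hedge_closed _ hxvis f hfC (Sym2.out_fst_mem _)
  exact ⟨vs, es, htr, hne, fun e => ⟨hcover e, htr.subset e⟩, hnd⟩

lemma decomp_deg_le {F : Set G.E} {D : Set (Set G.E)}
    (hD : G.IsCycleDecompOn F D) (v : G.V) : G.degOn F v ≤ 2 * D.ncard := by
  classical
  haveI := G.finE
  set s := (Set.toFinite {e | e ∈ F ∧ v ∈ G.ends e}).toFinset with hs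
  set t := (Set.toFinite D).toFinset with ht
  have hdegs : G.degOn F v = s.card := by
    rw [degOn, hs, Set.ncard_eq_toFinset_card _ (Set.toFinite _)]
  have htD : t.card = D.ncard := by
    rw [ht, Set.ncard_eq_toFinset_card _ (Set.toFinite _)]
  let f : G.E → Set G.E := fun e =>
    if h : e ∈ F then (hD.2 e h).exists.choose else ∅
  have hmaps : ∀ e ∈ s, f e ∈ t := by
    intro e he
    rw [hs, Set.Finite.mem_toFinset] at he
    rw [ht, Set.Finite.mem_toFinset]
    have := (hD.2 e he.1).exists.choose_spec
    simp only [f, dif_pos he.1]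
    exact this.1
  have hfibers : ∀ C ∈ t, (s.filter (fun e => f e = C)).card ≤ 2 := by
    intro C hC
    rw [ht, Set.Finite.mem_toFinset] at hC
    have hCd : G.degOn C v = 0 ∨ G.degOn C v = 2 := ((hD.1 C hC).1).2.1 v
    have hsubs : ↑(s.filter (fun e => f e = C)) ⊆ {e | e ∈ C ∧ v ∈ G.ends e} := by
      intro e he
      simp only [Finset.coe_filter, Set.mem_setOf_eq] at he
      obtain ⟨hes, hfe⟩ := he
      rw [hs, Set.Finite.mem_toFinset] at hes
      have hspec := (hD.2 e hes.1).exists.choose_spec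
      have : f e = (hD.2 e hes.1).exists.choose := by simp only [f, dif_pos hes.1]
      rw [this] at hfe
      exact ⟨hfe ▸ hspec.2, hes.2⟩
    have := Set.ncard_le_ncard hsubs (Set.toFinite _)
    rw [Set.ncard_coe_finset] at this
    rw [degOn] at hCd
    omega
  have := Finset.card_le_mul_card_image_of_maps_to hmaps 2 hfibers
  omega


lemma insert_decomp {C3 : Set G.E} {D : Set (Set G.E)}
    (hC3 : G.IsCycle C3) (hD : G.IsCycleDecompOn (Set.univ \ C3) D) :
    G.IsCycleDecompOn Set.univ (insert C3 D) := by
  constructor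
  · intro C hC
    rcases Set.mem_insert_iff.mp hC with rfl | hC
    · exact ⟨hC3, Set.subset_univ _⟩
    · exact ⟨(hD.1 C hC).1, Set.subset_univ _⟩
  · intro e _
    by_cases heC : e ∈ C3
    · refine ⟨C3, ⟨Set.mem_insert _ _, heC⟩, ?_⟩
      rintro C' ⟨hC', heC'⟩
      rcases Set.mem_insert_iff.mp hC' with rfl | hC'
      · rfl
      · exact absurd ((hD.1 C' hC').2 heC').2 (not_not.mpr heC)
    · obtain ⟨C', ⟨hC'D, heC'⟩, huniq⟩ := hD.2 e ⟨Set.mem_univ e, heC⟩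
      refine ⟨C', ⟨Set.mem_insert_of_mem _ hC'D, heC'⟩, ?_⟩
      rintro C'' ⟨hC'', heC''⟩
      rcases Set.mem_insert_iff.mp hC'' with rfl | hC''
      · exact absurd heC'' heC
      · exact huniq C'' ⟨hC'', heC''⟩

lemma decomp_card_le {F : Set G.E} {D : Set (Set G.E)}
    (hD : G.IsCycleDecompOn F D) : D.ncard ≤ Nat.card (Set G.E) := by
  haveI := G.finE
  have h := Set.ncard_le_ncard (Set.subset_univ D) Set.finite_univ
  rwa [Set.ncard_univ] at h

end MGraph
/-- a multigraph that is the disjoint union of two edge-disjoint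
cycles sharing at least three vertices has c = 2 and ν ≥ 3. -/
theorem two_cycles_sharing_three (G : MGraph) (C1 C2 : Set G.E)
    (h1 : G.IsCycle C1) (h2 : G.IsCycle C2) (hd : Disjoint C1 C2)
    (hu : C1 ∪ C2 = Set.univ)
    (hshare : 3 ≤ (G.VertexSetOf C1 ∩ G.VertexSetOf C2).ncard) :
    G.c = 2 ∧ 3 ≤ G.nu := by
  classical
  haveI := G.finE
  haveI := G.finV
  open MGraph in
  set Sh := G.VertexSetOf C1 ∩ G.VertexSetOf C2 with hShdef
  have hdeg1 : ∀ x ∈ G.VertexSetOf C1, G.degOn C1 x = 2 := by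
    intro x hx
    rcases h1.2.1 x with h' | h'
    · have := MGraph.mem_vertexSetOf_iff.mp hx; omega
    · exact h'
  have hdeg2 : ∀ x ∈ G.VertexSetOf C2, G.degOn C2 x = 2 := by
    intro x hx
    rcases h2.2.1 x with h' | h'
    · have := MGraph.mem_vertexSetOf_iff.mp hx; omega
    · exact h'
  have hdegU : ∀ x, G.degOn Set.univ x = G.degOn C1 x + G.degOn C2 x := by
    intro x
    conv_lhs => rw [← hu]
    exact G.degOn_union hd x
  obtain ⟨u0, hu0⟩ : Sh.Nonempty := Set.nonempty_of_ncard_ne_zero (by omega)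
  have hdegU4 : ∀ x ∈ Sh, G.degOn Set.univ x = 4 := by
    intro x hx
    rw [hdegU, hdeg1 x hx.1, hdeg2 x hx.2]
  have hbdd : BddAbove {n | ∃ D, G.IsCycleDecompOn Set.univ D ∧ D.ncard = n} := by
    refine ⟨Nat.card (Set G.E), ?_⟩
    rintro n ⟨D, hD, rfl⟩
    exact MGraph.decomp_card_le hD
  have hC1C2ne : C1 ≠ C2 := by
    obtain ⟨e, he⟩ := h1.1
    intro h'
    exact Set.disjoint_left.mp hd he (h' ▸ he)
  have hpair : G.IsCycleDecompOn Set.univ {C1, C2} := by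
    constructor
    · intro C hC
      rcases hC with rfl | rfl
      · exact ⟨h1, Set.subset_univ _⟩
      · exact ⟨h2, Set.subset_univ _⟩
    · intro e _
      have he12 : e ∈ C1 ∪ C2 := by rw [hu]; exact Set.mem_univ e
      rcases he12 with he1 | he2
      · refine ⟨C1, ⟨Set.mem_insert _ _, he1⟩, ?_⟩
        rintro C' ⟨hC', heC'⟩
        rcases hC' with rfl | rfl
        · rfl
        · exact (Set.disjoint_left.mp hd he1 heC').elim
      · refine ⟨C2, ⟨Set.mem_insert_of_mem _ rfl, he2⟩, ?_⟩
        rintro C' ⟨hC', heC'⟩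
        rcases hC' with rfl | rfl
        · exact (Set.disjoint_left.mp hd heC' he2).elim
        · rfl
  have h2mem : 2 ∈ {n | ∃ D, G.IsCycleDecompOn Set.univ D ∧ D.ncard = n} :=
    ⟨{C1, C2}, hpair, Set.ncard_pair hC1C2ne⟩
  have hge2 : ∀ n ∈ {n | ∃ D, G.IsCycleDecompOn Set.univ D ∧ D.ncard = n}, 2 ≤ n := by
    rintro n ⟨D, hD, rfl⟩
    have h4 := MGraph.decomp_deg_le hD u0
    rw [hdegU4 u0 hu0] at h4
    omega
  have hc2 : G.c = 2 := le_antisymm (Nat.sInf_le h2mem) (le_csInf ⟨2, h2mem⟩ hge2)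
  refine ⟨hc2, ?_⟩
  -- now the ν ≥ 3 part
  obtain ⟨vs, es, T, hTne, hTcov, hTnd⟩ := h1.exists_rep hu0.1
  have hvs_ne : vs ≠ [] := by
    intro h'
    apply hTne
    have hl := T.length_eq
    rw [h'] at hl
    exact List.length_eq_zero_iff.mp hl.symm
  have hdc1 : (u0 :: vs).dropLast = u0 :: vs.dropLast :=
    List.dropLast_cons_of_ne_nil hvs_ne
  rw [hdc1, List.nodup_cons] at hTnd
  obtain ⟨hnd1a, hnd1b⟩ := hTnd
  have hvsdec : vs = vs.dropLast ++ [u0] := by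
    have h0 := T.cons_decomp
    rw [hdc1, List.cons_append] at h0
    exact List.cons_injective h0
  have hV1 : ∀ x, x ∈ G.VertexSetOf C1 ↔ x ∈ u0 :: vs := by
    intro x
    constructor
    · rintro ⟨e, heC, hxe⟩
      exact T.ends_sub e ((hTcov e).mp heC) x hxe
    · intro hx
      obtain ⟨e, he, hxe⟩ := T.mem_verts hTne x hx
      exact ⟨e, (hTcov e).mpr he, hxe⟩
  -- pick v : first shared (≠ u0) vertex along the C1-trail
  have hexv : ∃ x ∈ vs, x ∈ Sh ∧ x ≠ u0 := by
    obtain ⟨x, hxSh, hxne⟩ := Set.exists_ne_of_one_lt_ncard (s := Sh) (by omega) u0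
    have hxv := (hV1 x).mp hxSh.1
    rcases List.mem_cons.mp hxv with rfl | hxvs
    · exact absurd rfl hxne
    · exact ⟨x, hxvs, hxSh, hxne⟩
  obtain ⟨l1, v, l2, hsplit, hvprop, hl1⟩ := MGraph.exists_first hexv
  obtain ⟨hvSh, hvne⟩ := hvprop
  have hvvs : v ∈ vs := by
    rw [hsplit]
    exact List.mem_append.mpr (Or.inr (List.mem_cons_self))
  have hvdl : v ∈ vs.dropLast := by
    have hmm : v ∈ vs.dropLast ++ [u0] := by rw [← hvsdec]; exact hvvs
    rcases List.mem_append.mp hmm with h' | h'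
    · exact h'
    · exact absurd (List.mem_singleton.mp h') hvne
  have hl2ne : l2 ≠ [] := by
    intro h'
    subst h'
    rw [hsplit, List.dropLast_concat] at hvdl
    exact hl1 v hvdl ⟨hvSh, hvne⟩
  have hdl_split : vs.dropLast = l1 ++ v :: l2.dropLast := by
    rw [hsplit, List.dropLast_append_cons, List.dropLast_cons_of_ne_nil hl2ne]
  have hl1Sh : ∀ y ∈ l1, y ∉ Sh := by
    intro y hy hySh
    by_cases hyu : y = u0
    · subst hyu
      exact hnd1a (hdl_split ▸ List.mem_append_left _ hy)
    · exact hl1 y hy ⟨hySh, hyu⟩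
  have hl1V1 : ∀ y ∈ l1, y ∈ G.VertexSetOf C1 := by
    intro y hy
    refine (hV1 y).mpr (List.mem_cons.mpr (Or.inr ?_))
    exact (List.dropLast_sublist vs).subset (hdl_split ▸ List.mem_append_left _ hy)
  -- pick w : third shared vertex
  obtain ⟨w, hwSh, hwne⟩ : ∃ w ∈ Sh, w ∉ ({u0, v} : Set G.V) := by
    have hsub : ({u0, v} : Set G.V) ⊆ Sh := by
      rintro z (rfl | rfl)
      · exact hu0
      · exact hvSh
    have hcard2 : ({u0, v} : Set G.V).ncard = 2 := Set.ncard_pair (Ne.symm hvne)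
    have hdc : (Sh \ {u0, v}).ncard = Sh.ncard - 2 := by
      rw [Set.ncard_diff hsub (Set.toFinite _), hcard2]
    have hne0 : (Sh \ ({u0, v} : Set G.V)).ncard ≠ 0 := by omega
    obtain ⟨w, hw⟩ := Set.nonempty_of_ncard_ne_zero hne0
    exact ⟨w, hw.1, hw.2⟩
  have hwu0 : w ≠ u0 := fun h' => hwne (by rw [h']; exact Set.mem_insert _ _)
  have hwv : w ≠ v := fun h' => hwne (by rw [h']; exact Set.mem_insert_of_mem _ rfl)
  -- split the C1-trail at v
  obtain ⟨es1, es2, hesplit, hlen1, T1, T2⟩ := MGraph.Trail.splitAt l1 T hsplit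
  have hes1ne : es1 ≠ [] := by
    intro h'
    rw [h'] at hlen1
    simp at hlen1
  -- representation of C2
  obtain ⟨xs, fs, T', hT'ne, hT'cov, hT'nd⟩ := h2.exists_rep hu0.2
  have hxs_ne : xs ≠ [] := by
    intro h'
    apply hT'ne
    have hl := T'.length_eq
    rw [h'] at hl
    exact List.length_eq_zero_iff.mp hl.symm
  have hdc2 : (u0 :: xs).dropLast = u0 :: xs.dropLast :=
    List.dropLast_cons_of_ne_nil hxs_ne
  rw [hdc2, List.nodup_cons] at hT'nd
  obtain ⟨hnd2a, hnd2b⟩ := hT'nd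
  have hxsdec : xs = xs.dropLast ++ [u0] := by
    have h0 := T'.cons_decomp
    rw [hdc2, List.cons_append] at h0
    exact List.cons_injective h0
  have hV2 : ∀ x, x ∈ G.VertexSetOf C2 ↔ x ∈ u0 :: xs := by
    intro x
    constructor
    · rintro ⟨e, heC, hxe⟩
      exact T'.ends_sub e ((hT'cov e).mp heC) x hxe
    · intro hx
      obtain ⟨e, he, hxe⟩ := T'.mem_verts hT'ne x hx
      exact ⟨e, (hT'cov e).mpr he, hxe⟩
  have hmem_dl2 : ∀ x ∈ G.VertexSetOf C2, x ≠ u0 → x ∈ xs.dropLast := by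
    intro x hx hxne
    have hxxs : x ∈ xs := by
      rcases List.mem_cons.mp ((hV2 x).mp hx) with rfl | h'
      · exact absurd rfl hxne
      · exact h'
    have hmm : x ∈ xs.dropLast ++ [u0] := by rw [← hxsdec]; exact hxxs
    rcases List.mem_append.mp hmm with h' | h'
    · exact h'
    · exact absurd (List.mem_singleton.mp h') hxne
  have hvdl2 : v ∈ xs.dropLast := hmem_dl2 v hvSh.2 hvne
  obtain ⟨m1, v', m2, hsplit2, hv'eq, hm1⟩ :=
    MGraph.exists_first (p := fun y => v = y) ⟨v, (List.dropLast_sublist xs).subset hvdl2, rfl⟩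
  subst hv'eq
  have hm2ne : m2 ≠ [] := by
    intro h'
    subst h'
    rw [hsplit2, List.dropLast_concat] at hvdl2
    exact hm1 v hvdl2 rfl
  have hdl_split2 : xs.dropLast = m1 ++ v :: m2.dropLast := by
    rw [hsplit2, List.dropLast_append_cons, List.dropLast_cons_of_ne_nil hm2ne]
  have hm2dec : m2 = m2.dropLast ++ [u0] := by
    have h0 : m1 ++ v :: m2 = m1 ++ v :: (m2.dropLast ++ [u0]) := by
      rw [← hsplit2]
      conv_lhs => rw [hxsdec, hdl_split2]
      simp
    exact List.cons_injective (List.append_cancel_left h0)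
  obtain ⟨fs1, fs2, hfsplit, hflen1, T1', T2'⟩ := MGraph.Trail.splitAt m1 T' hsplit2
  have hnd2b' : (m1 ++ v :: m2.dropLast).Nodup := by rw [← hdl_split2]; exact hnd2b
  have hwdl2 : w ∈ xs.dropLast := hmem_dl2 w hwSh.2 hwu0
  rw [hdl_split2] at hwdl2
  have hndapp := List.nodup_append.mp hnd2b'
  -- build the second arc TQ : v → u0 inside C2 avoiding w
  have hQ : ∃ qcore qes, G.Trail C2 v u0 (qcore ++ [u0]) qes ∧ qes ≠ [] ∧
      (∀ y ∈ qcore, y ∈ xs.dropLast) ∧ v ∉ qcore ∧ w ∉ qcore ∧ qcore.Nodup ∧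
      u0 ∉ qcore := by
    have hu0m1 : u0 ∉ m1 := fun h' =>
      hnd2a (hdl_split2 ▸ List.mem_append_left _ h')
    have hu0m2 : u0 ∉ m2.dropLast := fun h' =>
      hnd2a (hdl_split2 ▸ List.mem_append_right _ (List.mem_cons_of_mem _ h'))
    have hvm2 : v ∉ m2.dropLast := by
      have hsubnd : (v :: m2.dropLast).Nodup :=
        hnd2b'.sublist (List.sublist_append_right _ _)
      exact (List.nodup_cons.mp hsubnd).1
    rcases List.mem_append.mp hwdl2 with hw1 | hw2
    · -- w ∈ m1 : take the second arc (fs2)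
      refine ⟨m2.dropLast, fs2, ?_, ?_, ?_, hvm2, ?_, ?_, hu0m2⟩
      · rw [← hm2dec]; exact T2'
      · intro h'
        have hl := T2'.length_eq
        rw [h'] at hl
        exact hm2ne (List.length_eq_zero_iff.mp hl)
      · intro y hy
        rw [hdl_split2]
        exact List.mem_append_right _ (List.mem_cons_of_mem _ hy)
      · intro hwq
        exact hndapp.2.2 _ hw1 _ (List.mem_cons_of_mem _ hwq) rfl
      · exact ((List.nodup_cons.mp (hnd2b'.sublist
          (List.sublist_append_right _ _)))).2
    · -- w ∈ v :: m2.dropLast, so w ∈ m2.dropLast : take the reversed first arc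
      have hw2' : w ∈ m2.dropLast := by
        rcases List.mem_cons.mp hw2 with h' | h'
        · exact absurd h' hwv
        · exact h'
      have hrev := T1'.reverse
      have hlist : (u0 :: (m1 ++ [v])).reverse.tail = m1.reverse ++ [u0] := by
        rw [show u0 :: (m1 ++ [v]) = (u0 :: m1) ++ [v] by rfl, List.reverse_append]
        simp
      rw [hlist] at hrev
      refine ⟨m1.reverse, fs1.reverse, hrev, ?_, ?_, ?_, ?_, ?_, ?_⟩
      · intro h'
        have h'' : fs1 = [] := by simpa using congrArg List.reverse h'
        rw [h''] at hflen1
        simp at hflen1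
      · intro y hy
        rw [hdl_split2]
        exact List.mem_append_left _ (List.mem_reverse.mp hy)
      · rw [List.mem_reverse]
        intro h'
        exact hm1 v h' rfl
      · rw [List.mem_reverse]
        intro h'
        exact hndapp.2.2 _ h' _ (List.mem_cons_of_mem _ hw2') rfl
      · exact List.nodup_reverse.mpr hndapp.1
      · rw [List.mem_reverse]
        exact hu0m1
  obtain ⟨qcore, qes, TQ, hqne, hqsub, hvq, hwq, hqnd, hu0q⟩ := hQ
  -- glue the two arcs into the cycle C3
  have hdisj_e : ∀ e ∈ es1, e ∉ qes := fun e he hq =>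
    Set.disjoint_left.mp hd (T1.subset e he) (TQ.subset _ hq)
  have T3 := (T1.mono (Set.subset_univ C1)).append (TQ.mono (Set.subset_univ C2)) hdisj_e
  have hT3ne : es1 ++ qes ≠ [] := by
    intro h'
    rw [List.append_eq_nil_iff] at h'
    exact hes1ne h'.1
  have hint : (u0 :: ((l1 ++ [v]) ++ (qcore ++ [u0]))).dropLast =
      u0 :: (l1 ++ v :: qcore) := by
    have hx : u0 :: ((l1 ++ [v]) ++ (qcore ++ [u0])) =
        (u0 :: (l1 ++ v :: qcore)) ++ [u0] := by simp
    rw [hx, List.dropLast_concat]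
  have hl1nd : l1.Nodup := by
    have := hnd1b
    rw [hdl_split] at this
    exact (List.nodup_append.mp this).1
  have hqV2 : ∀ y ∈ qcore, y ∈ G.VertexSetOf C2 := by
    intro y hy
    exact (hV2 y).mpr (List.mem_cons.mpr (Or.inr
      ((List.dropLast_sublist xs).subset (hqsub y hy))))
  have hndC3 : (u0 :: (l1 ++ v :: qcore)).Nodup := by
    rw [List.nodup_cons, List.nodup_append]
    refine ⟨?_, hl1nd, List.nodup_cons.mpr ⟨hvq, hqnd⟩, ?_⟩
    · intro hmem
      rcases List.mem_append.mp hmem with h' | h'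
      · exact hnd1a (hdl_split ▸ List.mem_append_left _ h')
      · rcases List.mem_cons.mp h' with h'' | h''
        · exact hvne h''.symm
        · exact hu0q h''
    · intro y hy z hy' hyz
      subst hyz
      have hyNotSh := hl1Sh y hy
      rcases List.mem_cons.mp hy' with rfl | hyq
      · exact hyNotSh hvSh
      · exact hyNotSh ⟨hl1V1 y hy, hqV2 y hyq⟩
  have hC3cyc : G.IsCycle {f | f ∈ es1 ++ qes} := by
    refine T3.isCycle hT3ne ?_
    rw [hint]
    exact hndC3
  -- w is not on C3
  have hwnotin : w ∉ (l1 ++ [v]) ++ (qcore ++ [u0]) := by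
    intro hmem
    rcases List.mem_append.mp hmem with h' | h'
    · rcases List.mem_append.mp h' with h'' | h''
      · exact hl1Sh w h'' hwSh
      · exact hwv (List.mem_singleton.mp h'')
    · rcases List.mem_append.mp h' with h'' | h''
      · exact hwq h''
      · exact hwu0 (List.mem_singleton.mp h'')
  have hwC3 : G.degOn {f | f ∈ es1 ++ qes} w = 0 :=
    G.degOn_eq_zero (T3.not_mem_verts hwu0 hwnotin)
  -- the remainder R
  have hC3sub : {f | f ∈ es1 ++ qes} ⊆ Set.univ := Set.subset_univ _
  have hevenR : ∀ x, Even (G.degOn (Set.univ \ {f | f ∈ es1 ++ qes}) x) := by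
    intro x
    have hadd := G.degOn_sdiff_add hC3sub x
    have hU : Even (G.degOn Set.univ x) := by
      rw [hdegU]
      exact (MGraph.isCycle_even_deg h1 x).add (MGraph.isCycle_even_deg h2 x)
    have hC3e := MGraph.isCycle_even_deg hC3cyc x
    rw [Nat.even_iff] at *
    omega
  have hdegRw : G.degOn (Set.univ \ {f | f ∈ es1 ++ qes}) w = 4 := by
    have hadd := G.degOn_sdiff_add hC3sub w
    have h4 := hdegU4 w hwSh
    omega
  obtain ⟨DR, hDR, -⟩ := MGraph.exists_cycle_decompOn
    (Set.univ \ {f | f ∈ es1 ++ qes}).ncard _ le_rfl hevenR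
  have hDR2 : 2 ≤ DR.ncard := by
    have := MGraph.decomp_deg_le hDR w
    omega
  have hC3ne : ({f | f ∈ es1 ++ qes} : Set G.E).Nonempty := by
    rcases es1 with _ | ⟨e, t⟩
    · exact absurd rfl hes1ne
    · exact ⟨e, List.mem_append_left _ (List.mem_cons_self)⟩
  have hC3notin : {f | f ∈ es1 ++ qes} ∉ DR := by
    intro hmem
    obtain ⟨e, he⟩ := hC3ne
    exact ((hDR.1 _ hmem).2 he).2 he
  have hDfull := MGraph.insert_decomp hC3cyc hDR
  have hcard3 : (insert {f | f ∈ es1 ++ qes} DR).ncard = DR.ncard + 1 :=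
    Set.ncard_insert_of_notMem hC3notin (Set.toFinite _)
  have h3mem : (insert {f | f ∈ es1 ++ qes} DR).ncard ∈
      {n | ∃ D, G.IsCycleDecompOn Set.univ D ∧ D.ncard = n} := ⟨_, hDfull, rfl⟩
  exact le_trans (by omega) (le_csSup hbdd h3mem)
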